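/- Under the fusion data hypotheses, let ω : I → ℂ be a function such that ω_θ = 1 for every θ ∈ Θ (Θ is purely bosonic) and such that ω_μ = ω_λ · ω_θ whenever λ, μ ∈ Γ, θ ∈ Θ and N_{λθ}^μ ≠ 0 (triviality of the monodromy of Θ with Γ). Then ω_λ · Z_{λμ} = Z_{λμ} · ω_μ for all λ, μ ∈ I; equivalently, T Z = Z T where T is the diagonal I × I complex matrix with diagonal entries T_{λλ} = ω_λ. -/

import Mathlib

noncomputable section

/-- The coupling matrix `Z` built from the `Y`-matrix, the dimension function `d` and the
subsystem `Γ`: `Z_{λμ} = w_Γ⁻¹ ∑_{γ ∈ Γ} conj(Y_{λγ}) Y_{μγ}` if `λ, μ ∈ Γ` and `0` otherwise,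
where `w_Γ = ∑_{γ ∈ Γ} d_γ²`. -/
def Zmat {I : Type*} [DecidableEq I] (Y : I → I → ℂ) (d : I → ℝ) (Γ : Finset I) (l m : I) : ℂ :=
  if l ∈ Γ ∧ m ∈ Γ then
    ((∑ γ ∈ Γ, d γ ^ 2 : ℝ) : ℂ)⁻¹ * ∑ γ ∈ Γ, star (Y l γ) * Y m γ
  else 0

theorem stmt8
    {I : Type*} [Fintype I] [DecidableEq I] (zero : I) (bar : I → I)
    (hbar : Function.Involutive bar) (hbar0 : bar zero = zero)
    (N : I → I → I → ℕ)
    (hNsymm : ∀ l m v, N l m v = N m l v)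
    (hN0 : ∀ l v, N zero l v = if l = v then 1 else 0)
    (hFrob : ∀ l m v, N l m v = N (bar l) v m)
    (d : I → ℝ) (hdpos : ∀ l, 0 < d l) (hd0 : d zero = 1)
    (hdbar : ∀ l, d (bar l) = d l)
    (Y : I → I → ℂ)
    (hYsymm : ∀ l m, Y l m = Y m l)
    (hY0 : ∀ l, Y zero l = d l)
    (hYconj : ∀ l m, star (Y l m) = Y (bar l) m)
    (hYprod : ∀ l m r, Y l r * Y m r = (d r : ℂ) * ∑ v, (N l m v : ℂ) * Y v r)
    (Γ : Finset I) (hΓ0 : zero ∈ Γ) (hΓbar : ∀ γ ∈ Γ, bar γ ∈ Γ)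
    (hΓfus : ∀ l ∈ Γ, ∀ m ∈ Γ, ∀ v, N l m v ≠ 0 → v ∈ Γ)
    (Θ : Finset I) (hΘΓ : Θ ⊆ Γ) (hΘ0 : zero ∈ Θ) (hΘbar : ∀ θ ∈ Θ, bar θ ∈ Θ)
    (hdeg : ∀ μ ∈ Θ, ∑ γ ∈ Γ, (d γ : ℂ) * Y μ γ = ((∑ γ ∈ Γ, d γ ^ 2 : ℝ) : ℂ) * d μ)
    (hndeg : ∀ μ ∈ Γ, μ ∉ Θ → ∑ γ ∈ Γ, (d γ : ℂ) * Y μ γ = 0)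
    (ω : I → ℂ) (hω1 : ∀ θ ∈ Θ, ω θ = 1)
    (hmono : ∀ l ∈ Γ, ∀ m ∈ Γ, ∀ θ ∈ Θ, N l θ m ≠ 0 → ω m = ω l * ω θ) :
    (∀ l m : I, ω l * Zmat Y d Γ l m = Zmat Y d Γ l m * ω m) ∧
    Matrix.diagonal ω * Matrix.of (Zmat Y d Γ)
      = Matrix.of (Zmat Y d Γ) * Matrix.diagonal ω := by
  have key : ∀ l m : I, ω l * Zmat Y d Γ l m = Zmat Y d Γ l m * ω m := by
    intro l m
    by_cases hlm : l ∈ Γ ∧ m ∈ Γ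
    · obtain ⟨hl, hm⟩ := hlm
      have hw : (0:ℝ) < ∑ γ ∈ Γ, d γ ^ 2 :=
        Finset.sum_pos (fun γ _ => pow_pos (hdpos γ) 2) ⟨zero, hΓ0⟩
      have hwC : ((∑ γ ∈ Γ, d γ ^ 2 : ℝ) : ℂ) ≠ 0 := by
        exact_mod_cast ne_of_gt hw
      have hZ : Zmat Y d Γ l m = ∑ θ ∈ Θ, (N (bar l) m θ : ℂ) * d θ := by
        unfold Zmat
        rw [if_pos ⟨hl, hm⟩]
        have h1 : ∀ γ ∈ Γ, star (Y l γ) * Y m γ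
            = ∑ v, (d γ : ℂ) * ((N (bar l) m v : ℂ) * Y v γ) := by
          intro γ _
          rw [hYconj, hYprod, Finset.mul_sum]
        rw [Finset.sum_congr rfl h1, Finset.sum_comm]
        have h2 : ∀ v, ∑ γ ∈ Γ, (d γ : ℂ) * ((N (bar l) m v : ℂ) * Y v γ)
            = (N (bar l) m v : ℂ) * ∑ γ ∈ Γ, (d γ : ℂ) * Y v γ := by
          intro v
          rw [Finset.mul_sum]
          exact Finset.sum_congr rfl fun γ _ => by ring
        rw [Finset.sum_congr rfl fun v _ => h2 v]
        have h3 : ∑ v, (N (bar l) m v : ℂ) * ∑ γ ∈ Γ, (d γ : ℂ) * Y v γ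
            = ∑ v ∈ Θ, (N (bar l) m v : ℂ) * ∑ γ ∈ Γ, (d γ : ℂ) * Y v γ := by
          refine (Finset.sum_subset (Finset.subset_univ Θ) ?_).symm
          intro v _ hv
          by_cases hvΓ : v ∈ Γ
          · rw [hndeg v hvΓ hv, mul_zero]
          · have : N (bar l) m v = 0 := by
              by_contra hN
              exact hvΓ (hΓfus (bar l) (hΓbar l hl) m hm v hN)
            simp [this]
        have h4 : ∑ v ∈ Θ, (N (bar l) m v : ℂ) * ∑ γ ∈ Γ, (d γ : ℂ) * Y v γ
            = ∑ v ∈ Θ, (N (bar l) m v : ℂ) * (((∑ γ ∈ Γ, d γ ^ 2 : ℝ) : ℂ) * d v) :=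
          Finset.sum_congr rfl fun v hv => by rw [hdeg v hv]
        rw [h3, h4, Finset.mul_sum]
        refine Finset.sum_congr rfl fun v _ => ?_
        field_simp
      by_cases hz : Zmat Y d Γ l m = 0
      · rw [hz]; ring
      · have hex : ∃ θ ∈ Θ, N (bar l) m θ ≠ 0 := by
          by_contra h
          push_neg at h
          apply hz
          rw [hZ]
          exact Finset.sum_eq_zero fun θ hθ => by simp [h θ hθ]
        obtain ⟨θ, hθ, hN⟩ := hex
        have hNl : N l θ m ≠ 0 := by rw [hFrob]; exact hN
        rw [hmono l hl m hm θ hθ hNl, hω1 θ hθ]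
        ring
    · unfold Zmat; rw [if_neg hlm]; ring
  refine ⟨key, ?_⟩
  ext l m
  simp only [Matrix.diagonal_mul, Matrix.mul_diagonal, Matrix.of_apply]
  exact key l m
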